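/- Fix an integer k ≥ m̂ + 1. Let (Q_t)_{t ∈ ℕ} be a real sequence converging to a limit L, and let (R_t)_{t ∈ ℕ} satisfy, for every t ≥ 1, n_t·R_t = ( n_{t−1} − m·α·k·n_{t−1}/e_{t−1} − m·(1 − α) )·R_{t−1} + ( m·α·(k − 1)·n_{t−1}/e_{t−1} + m·(1 − α) )·Q_{t−1}. Then R_t converges as t → ∞, and lim_{t→∞} R_t = ( m·α·(k − 1)/(m + m̂) + m·(1 − α) ) / ( 1 + m·α·k/(m + m̂) + m·(1 − α) ) · L. -/

import Mathlib

open Filter Finset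

lemma aux_sum_div (N : ℕ) :
    Tendsto (fun t => ∑ s ∈ Finset.range t, (1:ℝ)/((N:ℝ)+s+1)) atTop atTop := by
  have h1 : Tendsto (fun t => ((N:ℝ)+1)⁻¹ * ∑ s ∈ Finset.range t, (1:ℝ)/(s+1)) atTop atTop :=
    Tendsto.const_mul_atTop (by positivity) Real.tendsto_sum_range_one_div_nat_succ_atTop
  refine tendsto_atTop_mono (fun t => ?_) h1
  rw [Finset.mul_sum]
  refine Finset.sum_le_sum fun s _ => ?_
  rw [← one_div, div_mul_div_comm, one_mul, div_le_div_iff₀ (by positivity) (by positivity)]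
  have : (0:ℝ) ≤ (N:ℝ) * s := by positivity
  nlinarith

lemma aux_sum_Ico (N T : ℕ) :
    Tendsto (fun t => ∑ s ∈ Finset.Ico T t, (1:ℝ)/((N:ℝ)+s+1)) atTop atTop := by
  have := (aux_sum_div N).atTop_add (tendsto_const_nhds (x := -(∑ s ∈ Finset.range T, (1:ℝ)/((N:ℝ)+s+1))))
  refine Tendsto.congr' ?_ this
  filter_upwards [eventually_ge_atTop T] with t ht
  rw [Finset.sum_Ico_eq_sub _ ht]
  ring

lemma aux_key (c : ℝ) (hc : 0 < c) (N : ℕ) (D g : ℕ → ℝ)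
    (hg : Tendsto g atTop (nhds 0))
    (hstep : ∀ᶠ s in atTop,
      |D (s+1)| ≤ (1 - c/((N:ℝ)+s+1)) * |D s| + (c/((N:ℝ)+s+1)) * g s) :
    Tendsto D atTop (nhds 0) := by
  rw [NormedAddCommGroup.tendsto_nhds_zero]
  intro ε hε
  have hsmall : ∀ᶠ s : ℕ in atTop, c/((N:ℝ)+s+1) ≤ 1 := by
    filter_upwards [eventually_ge_atTop ⌈c⌉₊] with s hs
    rw [div_le_one (by positivity)]
    calc c ≤ ⌈c⌉₊ := Nat.le_ceil c
    _ ≤ (s:ℝ) := by exact_mod_cast hs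
    _ ≤ (N:ℝ)+s+1 := by have := Nat.cast_nonneg (α:=ℝ) N; linarith
  have hgε : ∀ᶠ s : ℕ in atTop, g s ≤ ε/2 :=
    (hg.eventually_lt_const (by linarith)).mono fun s h => h.le
  obtain ⟨T, hT⟩ := eventually_atTop.mp (hstep.and (hsmall.and hgε))
  set u : ℕ → ℝ := fun t => max (|D t| - ε/2) 0 with hu
  have hu0 : ∀ t, 0 ≤ u t := fun t => le_max_right _ _
  have hustep : ∀ s, T ≤ s → u (s+1) ≤ Real.exp (-(c/((N:ℝ)+s+1))) * u s := by
    intro s hs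
    obtain ⟨h1, h2, h3⟩ := hT s hs
    have hcd : 0 ≤ c/((N:ℝ)+s+1) := by positivity
    have step2 : u (s+1) ≤ (1 - c/((N:ℝ)+s+1)) * u s := by
      apply max_le _ (by nlinarith [hu0 s])
      have : |D s| - ε/2 ≤ u s := le_max_left _ _
      nlinarith [hu0 s]
    calc u (s+1) ≤ (1 - c/((N:ℝ)+s+1)) * u s := step2
    _ ≤ Real.exp (-(c/((N:ℝ)+s+1))) * u s := by
        have := Real.add_one_le_exp (-(c/((N:ℝ)+s+1)))
        nlinarith [hu0 s]
  have hbound : ∀ t, T ≤ t →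
      u t ≤ Real.exp (-(c * ∑ s ∈ Finset.Ico T t, 1/((N:ℝ)+s+1))) * u T := by
    intro t ht
    induction t, ht using Nat.le_induction with
    | base => simp
    | succ t ht ih =>
      calc u (t+1) ≤ Real.exp (-(c/((N:ℝ)+t+1))) * u t := hustep t ht
      _ ≤ Real.exp (-(c/((N:ℝ)+t+1))) *
          (Real.exp (-(c * ∑ s ∈ Finset.Ico T t, 1/((N:ℝ)+s+1))) * u T) := by
          exact mul_le_mul_of_nonneg_left ih (Real.exp_nonneg _)
      _ = Real.exp (-(c * ∑ s ∈ Finset.Ico T (t+1), 1/((N:ℝ)+s+1))) * u T := by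
          rw [Finset.sum_Ico_succ_top ht, mul_add, neg_add, Real.exp_add, mul_one_div]
          ring
  have hexp : Tendsto (fun t => Real.exp (-(c * ∑ s ∈ Finset.Ico T t, 1/((N:ℝ)+s+1))) * u T)
      atTop (nhds 0) := by
    have h1 : Tendsto (fun t => -(c * ∑ s ∈ Finset.Ico T t, 1/((N:ℝ)+s+1))) atTop atBot :=
      tendsto_neg_atTop_atBot.comp (Tendsto.const_mul_atTop hc (aux_sum_Ico N T))
    simpa using (Real.tendsto_exp_atBot.comp h1).mul_const (u T)
  have hu_tendsto : Tendsto u atTop (nhds 0) := by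
    apply squeeze_zero' (Eventually.of_forall hu0) _ hexp
    exact eventually_atTop.mpr ⟨T, hbound⟩
  filter_upwards [hu_tendsto.eventually_lt_const (by linarith : (0:ℝ) < ε/2)] with t ht
  have : |D t| - ε/2 ≤ u t := le_max_left _ _
  rw [Real.norm_eq_abs]
  linarith

set_option maxHeartbeats 1000000 in
theorem indegree_fraction_limit_step
    (m mh : ℕ) (hm : 1 ≤ m)
    (α : ℝ) (hα : α ∈ Set.Icc (0 : ℝ) 1)
    (n0 e0 : ℕ) (hn0 : 1 ≤ n0) (he0 : 1 ≤ e0)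
    (k : ℕ) (hk : mh + 1 ≤ k)
    (Q R : ℕ → ℝ) (L : ℝ)
    (hQ : Tendsto Q atTop (nhds L))
    (hrec : ∀ t : ℕ, 1 ≤ t →
      ((n0 + t : ℕ) : ℝ) * R t =
        (((n0 + (t - 1) : ℕ) : ℝ)
            - (m : ℝ) * α * (k : ℝ) * ((n0 + (t - 1) : ℕ) : ℝ)
                / ((e0 + (m + mh) * (t - 1) : ℕ) : ℝ)
            - (m : ℝ) * (1 - α)) * R (t - 1)
        + ((m : ℝ) * α * ((k : ℝ) - 1) * ((n0 + (t - 1) : ℕ) : ℝ)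
              / ((e0 + (m + mh) * (t - 1) : ℕ) : ℝ)
            + (m : ℝ) * (1 - α)) * Q (t - 1)) :
    Tendsto R atTop
      (nhds ((((m : ℝ) * α * ((k : ℝ) - 1) / ((m : ℝ) + (mh : ℝ)) + (m : ℝ) * (1 - α)) /
          (1 + (m : ℝ) * α * (k : ℝ) / ((m : ℝ) + (mh : ℝ)) + (m : ℝ) * (1 - α))) * L)) := by
  obtain ⟨hα0, hα1⟩ := hα
  have hm1 : (1:ℝ) ≤ (m:ℝ) := by exact_mod_cast hm
  have hk1 : (1:ℝ) ≤ (k:ℝ) := by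
    have : 1 ≤ k := le_trans (Nat.le_add_left 1 mh) hk
    exact_mod_cast this
  have hmh0 : (0:ℝ) ≤ (mh:ℝ) := Nat.cast_nonneg mh
  set M : ℝ := (m:ℝ) + (mh:ℝ) with hMdef
  have hMpos : 0 < M := by rw [hMdef]; linarith
  set γ : ℝ := (m:ℝ)*α*(k:ℝ)/M + (m:ℝ)*(1-α) with hγdef
  set δ : ℝ := (m:ℝ)*α*((k:ℝ)-1)/M + (m:ℝ)*(1-α) with hδdef
  have hγ1 : 0 ≤ (m:ℝ)*α*(k:ℝ)/M := by positivity
  have hγ2 : 0 ≤ (m:ℝ)*(1-α) := by nlinarith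
  have hγpos : 0 < γ := by
    rcases lt_or_eq_of_le hα1 with h1 | h1
    · have : 0 < (m:ℝ)*(1-α) := by nlinarith
      rw [hγdef]; linarith
    · have : 0 < (m:ℝ)*α*(k:ℝ)/M := by
        apply div_pos _ hMpos
        rw [h1]; nlinarith
      rw [hγdef]; linarith
  have hBpos : 0 < 1 + γ := by linarith
  set r : ℝ := δ/(1+γ) * L with hrdef
  suffices hR : Tendsto R atTop (nhds r) by
    have heq : (((m : ℝ) * α * ((k : ℝ) - 1) / M + (m : ℝ) * (1 - α)) /
          (1 + (m : ℝ) * α * (k : ℝ) / M + (m : ℝ) * (1 - α))) * L = r := by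
      rw [hrdef, hδdef, hγdef]; ring_nf
    rw [heq]; exact hR
  -- convergence of the ratio n_s / e_s
  have hratio : Tendsto (fun s : ℕ => ((n0+s:ℕ):ℝ)/((e0+(m+mh)*s:ℕ):ℝ)) atTop (nhds (1/M)) := by
    have hn : Tendsto (fun s : ℕ => (n0:ℝ)/s + 1) atTop (nhds 1) := by
      simpa using (tendsto_const_div_atTop_nhds_zero_nat (n0:ℝ)).add_const 1
    have he : Tendsto (fun s : ℕ => (e0:ℝ)/s + M) atTop (nhds M) := by
      simpa using (tendsto_const_div_atTop_nhds_zero_nat (e0:ℝ)).add_const M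
    have h1 : Tendsto (fun s : ℕ => ((n0:ℝ)/s + 1)/((e0:ℝ)/s + M)) atTop (nhds (1/M)) := by
      simpa [Pi.div_def] using hn.div he hMpos.ne'
    refine Tendsto.congr' ?_ h1
    filter_upwards [eventually_gt_atTop 0] with s hs
    have hs' : (0:ℝ) < s := by exact_mod_cast hs
    have hes : (0:ℝ) < (e0:ℝ) + ((m:ℝ)+(mh:ℝ))*s := by
      have : (1:ℝ) ≤ (e0:ℝ) := by exact_mod_cast he0
      nlinarith
    rw [hMdef]
    push_cast
    rw [div_eq_div_iff (by positivity) hes.ne']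
    field_simp
  set γf : ℕ → ℝ := fun s =>
    (m:ℝ)*α*(k:ℝ)*((n0+s:ℕ):ℝ)/((e0+(m+mh)*s:ℕ):ℝ) + (m:ℝ)*(1-α) with hγfdef
  set δf : ℕ → ℝ := fun s =>
    (m:ℝ)*α*((k:ℝ)-1)*((n0+s:ℕ):ℝ)/((e0+(m+mh)*s:ℕ):ℝ) + (m:ℝ)*(1-α) with hδfdef
  have hγf : Tendsto γf atTop (nhds γ) := by
    have h0 := (hratio.const_mul ((m:ℝ)*α*(k:ℝ))).add_const ((m:ℝ)*(1-α))
    have e1 : γ = (m:ℝ)*α*(k:ℝ) * (1/M) + (m:ℝ)*(1-α) := by rw [hγdef]; ring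
    rw [e1]
    exact h0.congr (fun s => by rw [hγfdef]; ring)
  have hδf : Tendsto δf atTop (nhds δ) := by
    have h0 := (hratio.const_mul ((m:ℝ)*α*((k:ℝ)-1))).add_const ((m:ℝ)*(1-α))
    have e1 : δ = (m:ℝ)*α*((k:ℝ)-1) * (1/M) + (m:ℝ)*(1-α) := by rw [hδdef]; ring
    rw [e1]
    exact h0.congr (fun s => by rw [hδfdef]; ring)
  set h : ℕ → ℝ := fun s => δf s * Q s - (1 + γf s) * r with hhdef
  have hh : Tendsto h atTop (nhds 0) := by
    have h1 := (hδf.mul hQ).sub ((hγf.const_add 1).mul_const r)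
    have h2 : δ * L - (1 + γ) * r = 0 := by
      rw [hrdef]
      field_simp
      ring
    rwa [h2] at h1
  set c : ℝ := γ/2 with hcdef
  have hcpos : 0 < c := by rw [hcdef]; exact half_pos hγpos
  have hg : Tendsto (fun s => |h s|/c) atTop (nhds 0) := by
    have := (hh.abs).div_const c
    simpa using this
  have hstep : ∀ᶠ s in atTop,
      |R (s+1) - r| ≤ (1 - c/((n0:ℝ)+s+1)) * |R s - r| +
        (c/((n0:ℝ)+s+1)) * (|h s|/c) := by
    have hE1 : ∀ᶠ s in atTop, c < γf s := hγf.eventually_const_lt (by rw [hcdef]; linarith)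
    have hE2 : ∀ᶠ s in atTop, γf s < γ + 1 := hγf.eventually_lt_const (by linarith)
    have hE3 : ∀ᶠ s : ℕ in atTop, γ + 1 ≤ (s:ℝ) := by
      filter_upwards [eventually_ge_atTop ⌈γ+1⌉₊] with s hs
      calc γ + 1 ≤ ⌈γ+1⌉₊ := Nat.le_ceil _
      _ ≤ (s:ℝ) := by exact_mod_cast hs
    filter_upwards [hE1, hE2, hE3] with s h1 h2 h3
    have hns : ((n0+s:ℕ):ℝ) = (n0:ℝ)+s := by push_cast; ring
    have hnp : (0:ℝ) < (n0:ℝ)+s+1 := by positivity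
    have hrec' := hrec (s+1) (Nat.le_add_left 1 s)
    simp only [Nat.add_sub_cancel] at hrec'
    have key : ((n0:ℝ)+s+1) * (R (s+1) - r) =
        (((n0+s:ℕ):ℝ) - γf s) * (R s - r) + h s := by
      simp only [hhdef, hγfdef, hδfdef]
      push_cast at hrec' ⊢
      linear_combination hrec'
    have hcoef : |((n0+s:ℕ):ℝ) - γf s| ≤ (n0:ℝ)+s+1 - c := by
      rw [abs_of_nonneg (by rw [hns]; nlinarith [Nat.cast_nonneg (α := ℝ) n0])]
      rw [hns]; linarith
    have hmain : |R (s+1) - r| * ((n0:ℝ)+s+1) ≤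
        ((n0:ℝ)+s+1 - c)*|R s - r| + |h s| := by
      have e2 : |R (s+1) - r| * ((n0:ℝ)+s+1) = |((n0:ℝ)+s+1) * (R (s+1) - r)| := by
        rw [abs_mul, abs_of_pos hnp]; ring
      rw [e2, key]
      calc |(((n0+s:ℕ):ℝ) - γf s) * (R s - r) + h s|
          ≤ |((n0+s:ℕ):ℝ) - γf s| * |R s - r| + |h s| := by
            rw [← abs_mul]; exact abs_add_le _ _
      _ ≤ ((n0:ℝ)+s+1 - c)*|R s - r| + |h s| := by
            have := mul_le_mul_of_nonneg_right hcoef (abs_nonneg (R s - r))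
            linarith
    have e3 : (1 - c/((n0:ℝ)+s+1)) * |R s - r| + (c/((n0:ℝ)+s+1)) * (|h s|/c) =
        (((n0:ℝ)+s+1 - c)*|R s - r| + |h s|)/((n0:ℝ)+s+1) := by
      field_simp
    rw [e3, le_div_iff₀ hnp]
    exact hmain
  have hD : Tendsto (fun t => R t - r) atTop (nhds 0) := by
    refine aux_key c hcpos n0 (fun t => R t - r) (fun s => |h s|/c) hg ?_
    exact hstep
  have := hD.add_const r
  simpa using this
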